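/- Real λ with λ² − (m²+k²) = E > 0 is an eigenvalue of the transverse Dirac operator T(k,m) if and only if m·sin(2√E) + √E·cos(2√E) = 0. In particular the spectrum of T(k,m) is symmetric with respect to zero. -/

import Mathlib

open Real MeasureTheory

noncomputable section

abbrev E2 : Type := EuclideanSpace ℂ (Fin 2)

def muI : Measure ℝ := volume.restrict (Set.Ioo (-1) 1)

/-- `f ∈ H¹((-1,1),ℂ²)` with weak derivative `g` and the infinite-mass boundary
conditions `u₂(±1) = ∓u₁(±1)`. -/
def IsH1BC (f g : ℝ → E2) : Prop :=
  MemLp g 2 muI ∧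
  (∀ t ∈ Set.Icc (-1 : ℝ) 1, f t = f (-1) + ∫ s in (-1 : ℝ)..t, g s) ∧
  f 1 1 = - f 1 0 ∧ f (-1) 1 = f (-1) 0

/-- `lam` is an eigenvalue of the transverse Dirac operator
`T(k,m)u = -iσ₂u' + kσ₁u + mσ₃u` with infinite-mass boundary conditions, i.e.
there is a nonzero `u = f ∈ H¹` (with derivative `g`) satisfying the boundary
conditions and the eigenvalue equations. -/
def IsEigenvalue (k m lam : ℝ) : Prop :=
  ∃ f g : ℝ → E2, IsH1BC f g ∧ (∃ t ∈ Set.Icc (-1 : ℝ) 1, f t ≠ 0) ∧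
    (∀ t ∈ Set.Icc (-1 : ℝ) 1,
      (m : ℂ) * f t 0 + (k : ℂ) * f t 1 - g t 1 = (lam : ℂ) * f t 0) ∧
    (∀ t ∈ Set.Icc (-1 : ℝ) 1,
      (k : ℂ) * f t 0 + g t 0 - (m : ℂ) * f t 1 = (lam : ℂ) * f t 1)

lemma muI_finite : IsFiniteMeasure muI := by
  constructor
  rw [muI, Measure.restrict_apply_univ]
  simp [Real.volume_Ioo]

lemma dirac_backward (k m lam E : ℝ) (hE : E = lam ^ 2 - (m ^ 2 + k ^ 2)) (hEpos : 0 < E)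
    (h : m * Real.sin (2 * Real.sqrt E) + Real.sqrt E * Real.cos (2 * Real.sqrt E) = 0) :
    IsEigenvalue k m lam := by
  haveI : IsFiniteMeasure muI := muI_finite
  set ω : ℝ := Real.sqrt E with hωdef
  have hω : 0 < ω := Real.sqrt_pos.mpr hEpos
  have hω2 : ω ^ 2 = E := Real.sq_sqrt hEpos.le
  set K : ℂ := (k : ℂ) with hK
  set Mc : ℂ := (m : ℂ) with hMc
  set L : ℂ := (lam : ℂ) with hL
  set W : ℂ := (ω : ℂ) with hWdef
  have hW : W ≠ 0 := by
    simp only [hWdef, ne_eq, Complex.ofReal_eq_zero]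
    exact hω.ne'
  have hkey : L ^ 2 - Mc ^ 2 - K ^ 2 = W ^ 2 := by
    have h0 : (lam ^ 2 - m ^ 2 - k ^ 2 : ℝ) = ω ^ 2 := by rw [hω2, hE]; ring
    rw [hK, hMc, hL, hWdef]
    exact_mod_cast congrArg (fun x : ℝ => (x : ℂ)) h0
  set γ : ℝ → ℂ := fun t => ((Real.cos (ω * (t + 1)) : ℝ) : ℂ) with hγ
  set σ : ℝ → ℂ := fun t => ((Real.sin (ω * (t + 1)) : ℝ) : ℂ) with hσ
  have haff : ∀ t : ℝ, HasDerivAt (fun t : ℝ => ω * (t + 1)) ω t := by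
    intro t
    simpa using ((hasDerivAt_id t).add_const (1 : ℝ)).const_mul ω
  have hγd : ∀ t : ℝ, HasDerivAt γ (-W * σ t) t := by
    intro t
    have h1 := ((Real.hasDerivAt_cos (ω * (t + 1))).comp t (haff t)).ofReal_comp
    refine h1.congr_deriv (Eq.symm ?_)
    rw [hσ, hWdef]; push_cast; ring
  have hσd : ∀ t : ℝ, HasDerivAt σ (W * γ t) t := by
    intro t
    have h1 := ((Real.hasDerivAt_sin (ω * (t + 1))).comp t (haff t)).ofReal_comp
    refine h1.congr_deriv (Eq.symm ?_)
    rw [hγ, hWdef]; push_cast; ring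
  set u : ℝ → ℂ := fun t => γ t + σ t * ((L + Mc - K) / W) with hu
  set v : ℝ → ℂ := fun t => γ t + σ t * ((Mc - L + K) / W) with hv
  have hud : ∀ t : ℝ, HasDerivAt u (-K * u t + (L + Mc) * v t) t := by
    intro t
    have h1 := (hγd t).add ((hσd t).mul_const ((L + Mc - K) / W))
    refine h1.congr_deriv (Eq.symm ?_)
    rw [hu, hv]
    field_simp
    linear_combination (-(σ t)) * hkey
  have hvd : ∀ t : ℝ, HasDerivAt v ((Mc - L) * u t + K * v t) t := by
    intro t
    have h1 := (hγd t).add ((hσd t).mul_const ((Mc - L + K) / W))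
    refine h1.congr_deriv (Eq.symm ?_)
    rw [hu, hv]
    field_simp
    linear_combination (-(σ t)) * hkey
  set f : ℝ → E2 := fun t => !₂[u t, v t] with hf
  set g : ℝ → E2 := fun t => !₂[-K * u t + (L + Mc) * v t, (Mc - L) * u t + K * v t] with hg
  have hcaff : Continuous fun t : ℝ => ω * (t + 1) :=
    continuous_const.mul (continuous_id.add continuous_const)
  have hcγ : Continuous γ := Complex.continuous_ofReal.comp (Real.continuous_cos.comp hcaff)
  have hcσ : Continuous σ := Complex.continuous_ofReal.comp (Real.continuous_sin.comp hcaff)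
  have hcu : Continuous u := hcγ.add (hcσ.mul continuous_const)
  have hcv : Continuous v := hcγ.add (hcσ.mul continuous_const)
  have hcg : Continuous g := by
    rw [hg]
    refine (PiLp.continuous_toLp 2 _).comp (continuous_pi fun i => ?_)
    fin_cases i
    · exact ((continuous_const.mul hcu).add (continuous_const.mul hcv))
    · exact ((continuous_const.mul hcu).add (continuous_const.mul hcv))
  have hfd : ∀ t : ℝ, HasDerivAt f (g t) t := by
    intro t
    have hF : HasDerivAt (fun t : ℝ => (![u t, v t] : Fin 2 → ℂ))
        ![-K * u t + (L + Mc) * v t, (Mc - L) * u t + K * v t] t := by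
      refine hasDerivAt_pi.2 fun i => ?_
      fin_cases i
      · simpa using hud t
      · simpa using hvd t
    exact (((PiLp.continuousLinearEquiv 2 ℂ (fun _ : Fin 2 => ℂ)).symm.toContinuousLinearMap.restrictScalars
      ℝ).hasFDerivAt.comp_hasDerivAt t hF)
  refine ⟨f, g, ⟨?_, ?_, ?_, ?_⟩, ?_, ?_, ?_⟩
  · -- Memℒp
    obtain ⟨C, hC⟩ := isCompact_Icc.exists_bound_of_continuousOn
      (s := Set.Icc (-1 : ℝ) 1) hcg.continuousOn
    refine (memLp_top_of_bound (hcg.aestronglyMeasurable) C ?_).mono_exponent le_top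
    rw [muI]
    exact (ae_restrict_mem measurableSet_Ioo).mono fun x hx =>
      hC x (Set.Ioo_subset_Icc_self hx)
  · -- integral identity
    intro t _
    have := intervalIntegral.integral_eq_sub_of_hasDerivAt
      (f := f) (f' := g) (a := (-1 : ℝ)) (b := t)
      (fun x _ => hfd x) (hcg.intervalIntegrable _ _)
    rw [this]
    abel
  · -- BC at 1
    have h2 : m * Real.sin (ω * (1 + 1)) + ω * Real.cos (ω * (1 + 1)) = 0 := by
      rw [show ω * (1 + 1) = 2 * ω by ring]
      exact h
    have hC : Mc * σ 1 + W * γ 1 = 0 := by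
      show (m : ℂ) * ((Real.sin (ω * (1 + 1)) : ℝ) : ℂ) +
        (ω : ℂ) * ((Real.cos (ω * (1 + 1)) : ℝ) : ℂ) = 0
      exact_mod_cast congrArg (fun x : ℝ => (x : ℂ)) h2
    show v 1 = -u 1
    rw [hu, hv]
    field_simp
    linear_combination (2 : ℂ) * hC
  · -- BC at -1
    show v (-1) = u (-1)
    rw [hu, hv, hγ, hσ]
    norm_num
  · -- nonzero
    refine ⟨-1, by norm_num, fun hzero => ?_⟩
    have h0 : f (-1) 0 = (0 : E2) 0 := by rw [hzero]
    have : u (-1) = 1 := by rw [hu, hγ, hσ]; norm_num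
    rw [show f (-1) 0 = u (-1) from rfl] at h0
    rw [this] at h0
    simp at h0
  · -- eq 1
    intro t _
    show Mc * u t + K * v t - ((Mc - L) * u t + K * v t) = L * u t
    ring
  · -- eq 2
    intro t _
    show K * u t + (-K * u t + (L + Mc) * v t) - Mc * v t = L * v t
    ring

lemma dirac_forward (k m lam E : ℝ) (hE : E = lam ^ 2 - (m ^ 2 + k ^ 2)) (hEpos : 0 < E)
    (hev : IsEigenvalue k m lam) :
    m * Real.sin (2 * Real.sqrt E) + Real.sqrt E * Real.cos (2 * Real.sqrt E) = 0 := by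
  obtain ⟨f, g, ⟨hg2, hfint, hbc1, hbcm1⟩, ⟨t₀, ht₀, hft₀⟩, heq1, heq2⟩ := hev
  haveI : IsFiniteMeasure muI := muI_finite
  set ω : ℝ := Real.sqrt E with hωdef
  have hω : 0 < ω := Real.sqrt_pos.mpr hEpos
  have hω2 : ω ^ 2 = E := Real.sq_sqrt hEpos.le
  set K : ℂ := (k : ℂ) with hK
  set Mc : ℂ := (m : ℂ) with hMc
  set L : ℂ := (lam : ℂ) with hL
  set W : ℂ := (ω : ℂ) with hWdef
  have hW : W ≠ 0 := by
    simp only [hWdef, ne_eq, Complex.ofReal_eq_zero]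
    exact hω.ne'
  have hkey : L ^ 2 - Mc ^ 2 - K ^ 2 = W ^ 2 := by
    have h0 : (lam ^ 2 - m ^ 2 - k ^ 2 : ℝ) = ω ^ 2 := by rw [hω2, hE]; ring
    rw [hK, hMc, hL, hWdef]
    exact_mod_cast congrArg (fun x : ℝ => (x : ℂ)) h0
  set γ : ℝ → ℂ := fun t => ((Real.cos (ω * (t + 1)) : ℝ) : ℂ) with hγ
  set σ : ℝ → ℂ := fun t => ((Real.sin (ω * (t + 1)) : ℝ) : ℂ) with hσ
  have haff : ∀ t : ℝ, HasDerivAt (fun t : ℝ => ω * (t + 1)) ω t := by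
    intro t
    simpa using ((hasDerivAt_id t).add_const (1 : ℝ)).const_mul ω
  have hγd : ∀ t : ℝ, HasDerivAt γ (-W * σ t) t := by
    intro t
    have h1 := ((Real.hasDerivAt_cos (ω * (t + 1))).comp t (haff t)).ofReal_comp
    refine h1.congr_deriv (Eq.symm ?_)
    rw [hσ, hWdef]; push_cast; ring
  have hσd : ∀ t : ℝ, HasDerivAt σ (W * γ t) t := by
    intro t
    have h1 := ((Real.hasDerivAt_sin (ω * (t + 1))).comp t (haff t)).ofReal_comp
    refine h1.congr_deriv (Eq.symm ?_)
    rw [hγ, hWdef]; push_cast; ring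
  have hpyth : ∀ t : ℝ, γ t ^ 2 + σ t ^ 2 = 1 := by
    intro t
    show ((Real.cos (ω * (t + 1)) : ℝ) : ℂ) ^ 2 + ((Real.sin (ω * (t + 1)) : ℝ) : ℂ) ^ 2 = 1
    have h0 : Real.cos (ω * (t + 1)) ^ 2 + Real.sin (ω * (t + 1)) ^ 2 = (1 : ℝ) := by
      have := Real.sin_sq_add_cos_sq (ω * (t + 1))
      linarith
    exact_mod_cast congrArg (fun x : ℝ => (x : ℂ)) h0
  set u : ℝ → ℂ := fun t => f t 0 with hu
  set v : ℝ → ℂ := fun t => f t 1 with hv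
  -- auxiliary continuous vector field
  set h : ℝ → E2 := fun t => !₂[-K * u t + (L + Mc) * v t, (Mc - L) * u t + K * v t] with hh
  have hgh : ∀ t ∈ Set.Icc (-1 : ℝ) 1, g t = h t := by
    intro t ht
    ext i
    fin_cases i
    · show g t 0 = -K * u t + (L + Mc) * v t
      linear_combination heq2 t ht
    · show g t 1 = (Mc - L) * u t + K * v t
      linear_combination -heq1 t ht
  -- integrability of g on Icc
  have hgi : IntegrableOn g (Set.Icc (-1 : ℝ) 1) volume := by
    have hint : Integrable g muI := (hg2.mono_exponent one_le_two).integrable le_rfl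
    rw [integrableOn_Icc_iff_integrableOn_Ioo]
    exact hint
  -- continuity of f on Icc
  have hfc : ContinuousOn f (Set.Icc (-1 : ℝ) 1) := by
    have hprim : ContinuousOn (fun t => f (-1) + ∫ s in (-1 : ℝ)..t, g s)
        (Set.Icc (-1 : ℝ) 1) := by
      apply continuousOn_const.add
      have : Set.uIcc (-1 : ℝ) 1 = Set.Icc (-1 : ℝ) 1 := Set.uIcc_of_le (by norm_num)
      rw [← this] at hgi ⊢
      exact intervalIntegral.continuousOn_primitive_interval hgi
    exact ContinuousOn.congr hprim hfint
  have hcu : ContinuousOn u (Set.Icc (-1 : ℝ) 1) :=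
    ((EuclideanSpace.proj (0 : Fin 2) : E2 →L[ℂ] ℂ).continuous.comp_continuousOn hfc)
  have hcv : ContinuousOn v (Set.Icc (-1 : ℝ) 1) :=
    ((EuclideanSpace.proj (1 : Fin 2) : E2 →L[ℂ] ℂ).continuous.comp_continuousOn hfc)
  have hhc : ContinuousOn h (Set.Icc (-1 : ℝ) 1) := by
    rw [hh]
    refine (PiLp.continuous_toLp 2 _).comp_continuousOn (continuousOn_pi.2 ?_)
    intro i
    fin_cases i
    · exact ((hcu.const_smul (-K)).add (hcv.const_smul (L + Mc)))
    · exact ((hcu.const_smul (Mc - L)).add (hcv.const_smul K))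
  have hhi : IntegrableOn h (Set.Icc (-1 : ℝ) 1) volume :=
    hhc.integrableOn_compact isCompact_Icc
  -- derivative of f within Icc
  have hfd : ∀ x ∈ Set.Icc (-1 : ℝ) 1, HasDerivWithinAt f (h x) (Set.Icc (-1 : ℝ) 1) x := by
    intro x hx
    haveI : Fact (x ∈ Set.Icc (-1 : ℝ) 1) := ⟨hx⟩
    have hint : IntervalIntegrable h volume (-1) x := by
      rw [intervalIntegrable_iff]
      exact hhi.mono_set (by
        rw [Set.uIoc_of_le hx.1]
        exact Set.Ioc_subset_Icc_self.trans (Set.Icc_subset_Icc le_rfl hx.2))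
    have hprim : HasDerivWithinAt (fun t => ∫ s in (-1 : ℝ)..t, h s) (h x)
        (Set.Icc (-1 : ℝ) 1) x :=
      intervalIntegral.integral_hasDerivWithinAt_right hint
        (hhc.stronglyMeasurableAtFilter_nhdsWithin measurableSet_Icc x) (hhc x hx)
    have hprim' : HasDerivWithinAt (fun t => f (-1) + ∫ s in (-1 : ℝ)..t, h s) (h x)
        (Set.Icc (-1 : ℝ) 1) x := hprim.const_add (f (-1))
    refine hprim'.congr (fun y hy => ?_) ?_
    · rw [hfint y hy]
      congr 1
      apply intervalIntegral.integral_congr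
      intro s hs
      exact hgh s (by
        rw [Set.uIcc_of_le hy.1] at hs
        exact ⟨hs.1, hs.2.trans hy.2⟩)
    · rw [hfint x hx]
      congr 1
      apply intervalIntegral.integral_congr
      intro s hs
      exact hgh s (by
        rw [Set.uIcc_of_le hx.1] at hs
        exact ⟨hs.1, hs.2.trans hx.2⟩)
  -- scalar derivatives
  have hud : ∀ x ∈ Set.Icc (-1 : ℝ) 1,
      HasDerivWithinAt u (-K * u x + (L + Mc) * v x) (Set.Icc (-1 : ℝ) 1) x := by
    intro x hx
    have := (((EuclideanSpace.proj (0 : Fin 2) : E2 →L[ℂ] ℂ).restrictScalars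
      ℝ).hasFDerivAt.comp_hasDerivWithinAt x (hfd x hx))
    exact this.congr_deriv (by simp [hh])
  have hvd : ∀ x ∈ Set.Icc (-1 : ℝ) 1,
      HasDerivWithinAt v ((Mc - L) * u x + K * v x) (Set.Icc (-1 : ℝ) 1) x := by
    intro x hx
    have := (((EuclideanSpace.proj (1 : Fin 2) : E2 →L[ℂ] ℂ).restrictScalars
      ℝ).hasFDerivAt.comp_hasDerivWithinAt x (hfd x hx))
    exact this.congr_deriv (by simp [hh])
  -- the conserved quantities
  set φ0 : ℝ → ℂ := fun t => W * (γ t * u t) + σ t * (K * u t - (L + Mc) * v t) with hφ0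
  set φ1 : ℝ → ℂ := fun t => W * (γ t * v t) - σ t * ((Mc - L) * u t + K * v t) with hφ1
  have hφ0d : ∀ x ∈ Set.Icc (-1 : ℝ) 1,
      HasDerivWithinAt φ0 0 (Set.Icc (-1 : ℝ) 1) x := by
    intro x hx
    have h1 := (((hγd x).hasDerivWithinAt.mul (hud x hx)).const_mul W).add
      ((hσd x).hasDerivWithinAt.mul
        (((hud x hx).const_mul K).sub ((hvd x hx).const_mul (L + Mc))))
    refine h1.congr_deriv (Eq.symm ?_)
    simp only [Pi.sub_apply]
    linear_combination (-(σ x * u x)) * hkey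
  have hφ1d : ∀ x ∈ Set.Icc (-1 : ℝ) 1,
      HasDerivWithinAt φ1 0 (Set.Icc (-1 : ℝ) 1) x := by
    intro x hx
    have h1 := (((hγd x).hasDerivWithinAt.mul (hvd x hx)).const_mul W).sub
      ((hσd x).hasDerivWithinAt.mul
        (((hud x hx).const_mul (Mc - L)).add ((hvd x hx).const_mul K)))
    refine h1.congr_deriv (Eq.symm ?_)
    simp only [Pi.add_apply]
    linear_combination (-(σ x * v x)) * hkey
  -- constancy
  have hone : (-1 : ℝ) < 1 := by norm_num
  have hconst0 : ∀ x ∈ Set.Icc (-1 : ℝ) 1, φ0 x = φ0 (-1) := by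
    apply constant_of_derivWithin_zero
    · exact fun x hx => (hφ0d x hx).differentiableWithinAt
    · intro x hx
      exact (hφ0d x (Set.Ico_subset_Icc_self hx)).derivWithin
        (uniqueDiffOn_Icc hone x (Set.Ico_subset_Icc_self hx))
  have hconst1 : ∀ x ∈ Set.Icc (-1 : ℝ) 1, φ1 x = φ1 (-1) := by
    apply constant_of_derivWithin_zero
    · exact fun x hx => (hφ1d x hx).differentiableWithinAt
    · intro x hx
      exact (hφ1d x (Set.Ico_subset_Icc_self hx)).derivWithin
        (uniqueDiffOn_Icc hone x (Set.Ico_subset_Icc_self hx))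
  have hγm1 : γ (-1) = 1 := by
    show ((Real.cos (ω * (-1 + 1)) : ℝ) : ℂ) = 1
    norm_num
  have hσm1 : σ (-1) = 0 := by
    show ((Real.sin (ω * (-1 + 1)) : ℝ) : ℂ) = 0
    norm_num
  set a : ℂ := u (-1) with ha
  have hvm1 : v (-1) = a := hbcm1
  have hφ0m1 : φ0 (-1) = W * a := by
    show W * (γ (-1) * u (-1)) + σ (-1) * (K * u (-1) - (L + Mc) * v (-1)) = W * a
    rw [hγm1, hσm1, ← ha]
    ring
  have hφ1m1 : φ1 (-1) = W * a := by
    show W * (γ (-1) * v (-1)) - σ (-1) * ((Mc - L) * u (-1) + K * v (-1)) = W * a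
    rw [hγm1, hσm1, hvm1]
    ring
  -- a ≠ 0
  have hane : a ≠ 0 := by
    intro ha0
    apply hft₀
    have h0 : φ0 t₀ = 0 := by rw [hconst0 t₀ ht₀, hφ0m1, ha0, mul_zero]
    have h1 : φ1 t₀ = 0 := by rw [hconst1 t₀ ht₀, hφ1m1, ha0, mul_zero]
    have h0' : W * (γ t₀ * u t₀) + σ t₀ * (K * u t₀ - (L + Mc) * v t₀) = 0 := h0
    have h1' : W * (γ t₀ * v t₀) - σ t₀ * ((Mc - L) * u t₀ + K * v t₀) = 0 := h1
    have hp := hpyth t₀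
    have hu0 : u t₀ = 0 := by
      have hW2 : W ^ 2 * u t₀ = 0 := by
        linear_combination (γ t₀ * W - σ t₀ * K) * h0' + σ t₀ * (L + Mc) * h1' -
          (σ t₀ ^ 2 * u t₀) * hkey - (W ^ 2 * u t₀) * hp
      rcases mul_eq_zero.1 hW2 with h3 | h3
      · exact absurd h3 (pow_ne_zero 2 hW)
      · exact h3
    have hv0 : v t₀ = 0 := by
      have hW2 : W ^ 2 * v t₀ = 0 := by
        linear_combination (σ t₀ * (Mc - L)) * h0' + (γ t₀ * W + σ t₀ * K) * h1' -
          (σ t₀ ^ 2 * v t₀) * hkey - (W ^ 2 * v t₀) * hp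
      rcases mul_eq_zero.1 hW2 with h3 | h3
      · exact absurd h3 (pow_ne_zero 2 hW)
      · exact h3
    ext i
    fin_cases i
    · exact hu0
    · exact hv0
  -- evaluate at 1
  have h1mem : (1 : ℝ) ∈ Set.Icc (-1 : ℝ) 1 := by norm_num
  have hbv : v 1 = -u 1 := hbc1
  -- u 1 ≠ 0
  have hu1ne : u 1 ≠ 0 := by
    intro hu10
    apply hane
    have hWa : W * a = 0 := by
      rw [← hφ0m1, ← hconst0 1 h1mem]
      show W * (γ 1 * u 1) + σ 1 * (K * u 1 - (L + Mc) * v 1) = 0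
      rw [hbv, hu10]
      ring
    rcases mul_eq_zero.1 hWa with h3 | h3
    · exact absurd h3 hW
    · exact h3
  -- derive the condition
  have hAB : φ0 1 - φ1 1 = 0 := by
    rw [hconst0 1 h1mem, hconst1 1 h1mem, hφ0m1, hφ1m1]
    ring
  have hAB' : (W * (γ 1 * u 1) + σ 1 * (K * u 1 - (L + Mc) * v 1)) -
      (W * (γ 1 * v 1) - σ 1 * ((Mc - L) * u 1 + K * v 1)) = 0 := hAB
  rw [hbv] at hAB'
  have h2 : u 1 * (2 * (W * γ 1 + Mc * σ 1)) = 0 := by linear_combination hAB'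
  have hcond : W * γ 1 + Mc * σ 1 = 0 := by
    rcases mul_eq_zero.1 h2 with h3 | h3
    · exact absurd h3 hu1ne
    · linear_combination h3 / 2
  -- back to reals
  simp only [hWdef, hMc, hγ, hσ] at hcond
  have hreal : ω * Real.cos (ω * (1 + 1)) + m * Real.sin (ω * (1 + 1)) = 0 := by
    exact_mod_cast hcond
  rw [show (2 : ℝ) * ω = ω * (1 + 1) by ring]
  linarith [hreal]

/-- A real `λ` with `E := λ² − (m²+k²) > 0` is an eigenvalue of `T(k,m)` if and only
if `m·sin(2√E) + √E·cos(2√E) = 0`.  In particular, the spectrum of `T(k,m)` is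
symmetric with respect to zero. -/
theorem eigenvalue_characterization (k m lam E : ℝ) (hm : 0 ≤ m)
    (hE : E = lam^2 - (m^2 + k^2)) (hEpos : 0 < E) :
    (IsEigenvalue k m lam ↔
        m * Real.sin (2 * Real.sqrt E) + Real.sqrt E * Real.cos (2 * Real.sqrt E) = 0) ∧
      (IsEigenvalue k m lam ↔ IsEigenvalue k m (-lam)) := by
  have hE' : E = (-lam) ^ 2 - (m ^ 2 + k ^ 2) := by rw [hE]; ring
  constructor
  · exact ⟨dirac_forward k m lam E hE hEpos, dirac_backward k m lam E hE hEpos⟩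
  · constructor
    · intro h
      exact dirac_backward k m (-lam) E hE' hEpos (dirac_forward k m lam E hE hEpos h)
    · intro h
      exact dirac_backward k m lam E hE hEpos (dirac_forward k m (-lam) E hE' hEpos h)

end
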